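/- For α > 0 and λ > 0, the density power divergence Poisson loss l_α(λ, x) = Σ_{y=0}^∞ p_λ(y)^{1+α} − (1 + 1/α) p_λ(x)^α, where p_λ(y) = e^{−λ}λ^y/y!, satisfies: for X ~ Poisson(λ₀), the expectation E[l_α(λ, X)] is uniquely minimized over λ > 0 at λ = λ₀. -/

import Mathlib

/-- The Poisson probability mass function with mean `l`. -/
noncomputable def poissonPmf (l : ℝ) (y : ℕ) : ℝ :=
  Real.exp (-l) * l ^ y / (Nat.factorial y : ℝ)

lemma poissonPmf_pos {l : ℝ} (hl : 0 < l) (y : ℕ) : 0 < poissonPmf l y := by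
  unfold poissonPmf
  positivity

lemma poissonPmf_rpow {c : ℝ} (hc : 0 < c) (u : ℝ) (y : ℕ) :
    poissonPmf c y ^ u = Real.exp (-c) ^ u * (c ^ u) ^ y / ((Nat.factorial y : ℝ)) ^ u := by
  unfold poissonPmf
  rw [Real.div_rpow (by positivity) (by positivity), Real.mul_rpow (by positivity) (by positivity),
    ← Real.rpow_natCast c y, ← Real.rpow_mul hc.le, mul_comm (y:ℝ) u, Real.rpow_mul hc.le,
    Real.rpow_natCast]

lemma pois_summable {a b s t : ℝ} (ha : 0 < a) (hb : 0 < b) (hs : 0 ≤ s) (ht : 0 ≤ t)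
    (hst : 1 ≤ s + t) :
    Summable fun y : ℕ => poissonPmf a y ^ s * poissonPmf b y ^ t := by
  refine Summable.of_nonneg_of_le
    (f := fun y : ℕ =>
      (Real.exp (-a) ^ s * Real.exp (-b) ^ t) * ((a ^ s * b ^ t) ^ y / (Nat.factorial y : ℝ)))
    (fun y => by have := poissonPmf_pos ha y; have := poissonPmf_pos hb y; positivity)
    (fun y => ?_) ((Real.summable_pow_div_factorial (a ^ s * b ^ t)).mul_left _)
  have hF : (1 : ℝ) ≤ (Nat.factorial y : ℝ) := by exact_mod_cast (Nat.factorial_pos y)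
  have hFp : (0 : ℝ) < (Nat.factorial y : ℝ) := by positivity
  have key : poissonPmf a y ^ s * poissonPmf b y ^ t
      = (Real.exp (-a) ^ s * Real.exp (-b) ^ t) *
        ((a ^ s * b ^ t) ^ y / (Nat.factorial y : ℝ) ^ (s + t)) := by
    rw [poissonPmf_rpow ha, poissonPmf_rpow hb, div_mul_div_comm,
      ← Real.rpow_add hFp, mul_pow]
    ring
  rw [key]
  refine mul_le_mul_of_nonneg_left
    (div_le_div_of_nonneg_left (by positivity) hFp ?_) (by positivity)
  calc (Nat.factorial y : ℝ) = (Nat.factorial y : ℝ) ^ (1 : ℝ) := (Real.rpow_one _).symm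
    _ ≤ (Nat.factorial y : ℝ) ^ (s + t) := Real.rpow_le_rpow_of_exponent_le hF hst

lemma key_lt {α a b : ℝ} (hα : 0 < α) (ha : 0 < a) (hb : 0 < b) (hab : a ≠ b) :
    0 < b ^ (1 + α) - (1 + 1 / α) * (a * b ^ α) + (1 / α) * a ^ (1 + α) := by
  set t := a / b with htdef
  have ht : 0 < t := div_pos ha hb
  have hs : -1 ≤ t - 1 := by linarith
  have hs' : t - 1 ≠ 0 := by
    rw [sub_ne_zero]
    intro h
    exact hab (by rw [htdef, div_eq_one_iff_eq hb.ne'] at h; exact h)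
  have hB := one_add_mul_self_lt_rpow_one_add hs hs' (by linarith : (1 : ℝ) < 1 + α)
  rw [show (1 + (t - 1)) = t by ring] at hB
  have h2 : (0 : ℝ) < b ^ (1 + α) := Real.rpow_pos_of_pos hb _
  have h3 : a * b ^ α = t * b ^ (1 + α) := by
    rw [Real.rpow_add hb, Real.rpow_one, htdef]
    field_simp
  have h4 : a ^ (1 + α) = t ^ (1 + α) * b ^ (1 + α) := by
    rw [htdef, Real.div_rpow ha.le hb.le]
    field_simp
  have h5 : 0 < α * b ^ (1 + α) - (1 + α) * (a * b ^ α) + a ^ (1 + α) := by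
    rw [h3, h4]
    nlinarith [mul_lt_mul_of_pos_right hB h2]
  have heq : b ^ (1 + α) - (1 + 1 / α) * (a * b ^ α) + (1 / α) * a ^ (1 + α)
      = (1 / α) * (α * b ^ (1 + α) - (1 + α) * (a * b ^ α) + a ^ (1 + α)) := by
    field_simp
    ring
  rw [heq]
  exact mul_pos (by positivity) h5

lemma key_le {α a b : ℝ} (hα : 0 < α) (ha : 0 < a) (hb : 0 < b) :
    0 ≤ b ^ (1 + α) - (1 + 1 / α) * (a * b ^ α) + (1 / α) * a ^ (1 + α) := by
  by_cases hab : a = b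
  · subst hab
    have h : a * a ^ α = a ^ (1 + α) := by
      rw [Real.rpow_add ha, Real.rpow_one]
    have h0 : a ^ (1 + α) - (1 + 1 / α) * (a * a ^ α) + (1 / α) * a ^ (1 + α) = 0 := by
      rw [h]; ring
    linarith
  · exact (key_lt hα ha hb hab).le

/-- Fisher consistency of the minimum density power divergence functional for
the Poisson family: for `X ~ Poisson(lam0)`, the expected DPD loss
`E[l_α(λ, X)] = Σ_y p_λ(y)^{1+α} − (1+1/α) Σ_y p_{lam0}(y) p_λ(y)^α`
is uniquely minimized over `λ > 0` at `λ = lam0`. -/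
theorem stmt_11 (α lam0 : ℝ) (hα : 0 < α) (hlam0 : 0 < lam0) :
    ∀ l : ℝ, 0 < l → l ≠ lam0 →
      (∑' y : ℕ, poissonPmf lam0 y ^ (1 + α)) -
          (1 + 1 / α) * ∑' y : ℕ, poissonPmf lam0 y * poissonPmf lam0 y ^ α <
        (∑' y : ℕ, poissonPmf l y ^ (1 + α)) -
          (1 + 1 / α) * ∑' y : ℕ, poissonPmf lam0 y * poissonPmf l y ^ α := by
  intro l hl hne
  have hone : ∀ {c : ℝ} (hc : 0 < c) (y : ℕ),
      poissonPmf c y ^ (1 + α) = poissonPmf c y ^ (1 : ℝ) * poissonPmf c y ^ α := by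
    intro c hc y
    rw [← Real.rpow_add (poissonPmf_pos hc y)]
  -- summability facts
  have hSl : Summable fun y : ℕ => poissonPmf l y ^ (1 + α) := by
    have h := pois_summable (s := 1) (t := α) hl hl zero_le_one hα.le (by linarith)
    exact h.congr fun y => by rw [← Real.rpow_add (poissonPmf_pos hl y)]
  have hS0 : Summable fun y : ℕ => poissonPmf lam0 y ^ (1 + α) := by
    have h := pois_summable (s := 1) (t := α) hlam0 hlam0 zero_le_one hα.le (by linarith)
    exact h.congr fun y => by rw [← Real.rpow_add (poissonPmf_pos hlam0 y)]
  have hM : Summable fun y : ℕ => poissonPmf lam0 y * poissonPmf l y ^ α := by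
    have h := pois_summable (s := 1) (t := α) hlam0 hl zero_le_one hα.le (by linarith)
    exact h.congr fun y => by rw [Real.rpow_one]
  -- the divergence integrand
  set F : ℕ → ℝ := fun y => poissonPmf l y ^ (1 + α)
      - (1 + 1 / α) * (poissonPmf lam0 y * poissonPmf l y ^ α)
      + (1 / α) * poissonPmf lam0 y ^ (1 + α) with hFdef
  have hFsumm : Summable F := (hSl.sub (hM.mul_left _)).add (hS0.mul_left _)
  have hFnonneg : ∀ y, 0 ≤ F y :=
    fun y => key_le hα (poissonPmf_pos hlam0 y) (poissonPmf_pos hl y)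
  have hF0 : 0 < F 0 := by
    apply key_lt hα (poissonPmf_pos hlam0 0) (poissonPmf_pos hl 0)
    simp only [poissonPmf, pow_zero, Nat.factorial_zero, Nat.cast_one, mul_one, div_one]
    intro h
    exact hne (neg_injective (Real.exp_injective h)).symm
  have hFpos : 0 < ∑' y, F y := hF0.trans_le (Summable.le_tsum hFsumm 0 fun j _ => hFnonneg j)
  have htsumF : ∑' y, F y = (∑' y : ℕ, poissonPmf l y ^ (1 + α))
      - (1 + 1 / α) * (∑' y : ℕ, poissonPmf lam0 y * poissonPmf l y ^ α)
      + (1 / α) * ∑' y : ℕ, poissonPmf lam0 y ^ (1 + α) := by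
    rw [hFdef, Summable.tsum_add (hSl.sub (hM.mul_left _)) (hS0.mul_left _),
      Summable.tsum_sub hSl (hM.mul_left _), tsum_mul_left, tsum_mul_left]
  have hLHS : (∑' y : ℕ, poissonPmf lam0 y * poissonPmf lam0 y ^ α)
      = ∑' y : ℕ, poissonPmf lam0 y ^ (1 + α) := by
    apply tsum_congr
    intro y
    rw [Real.rpow_add (poissonPmf_pos hlam0 y), Real.rpow_one]
  rw [hLHS]
  rw [htsumF] at hFpos
  nlinarith [hFpos]
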